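/- arXiv:1612.05814 — 2 statements merged into one kernel-verified Lean document; each statement's English description precedes it below -/
import Mathlib

section
/- The number of embedded subsets of an n-set equals the Bell number B_{n+1}: |ℰ^N| = Σ_{k=1}^{n} (k+1)·S_{n,k} = B_{n+1}, where S_{n,k} is the number of partitions of an n-set into k blocks and B_{n+1} is the number of partitions of an (n+1)-set. Equivalently, the cardinality of ℰ^N equals the number of partitions of the set {1,…,n+1}. -/
open scoped BigOperators

/-- `modp n A` is the modular partition `P^A_⊥` of `Fin n` whose unique (possibly)
non-singleton block is `A`, all other blocks being singletons. -/
def modp (n : ℕ) (A : Set (Fin n)) : Setoid (Fin n) where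
  r x y := x = y ∨ (x ∈ A ∧ y ∈ A)
  iseqv := by
    refine ⟨fun _ => Or.inl rfl, ?_, ?_⟩
    · rintro x y (rfl | ⟨hx, hy⟩)
      · exact Or.inl rfl
      · exact Or.inr ⟨hy, hx⟩
    · rintro x y z (rfl | ⟨hx, hy⟩) h
      · exact h
      · rcases h with rfl | ⟨hy', hz⟩
        · exact Or.inr ⟨hx, hy⟩
        · exact Or.inr ⟨hx, hz⟩

/-- The product `X^N = 2^N × 𝒫^N` of the subset lattice and the partition lattice,
ordered componentwise. -/
abbrev XN (n : ℕ) := Set (Fin n) × Setoid (Fin n)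

/-- The closure operator `cl` on `X^N`:  `cl(∅,P) = (∅,P)` and, for `A ≠ ∅`,
`cl(A,P) = (Ā, P ⊔ P^A_⊥)` where `Ā` is the block of `P ⊔ P^A_⊥` containing `A`. -/
def EmbClosure (n : ℕ) (x : XN n) : XN n :=
  ({y | ∃ a ∈ x.1, (x.2 ⊔ modp n x.1) y a}, x.2 ⊔ modp n x.1)

/-- An embedded subset is a pair that coincides with its closure. -/
def IsEmbedded (n : ℕ) (x : XN n) : Prop := EmbClosure n x = x

/-- The lattice `ℰ^N` of embedded subsets, with the induced order. -/
abbrev Emb (n : ℕ) := {x : XN n // IsEmbedded n x}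

lemma modp_le_of_subsingleton {n : ℕ} {A : Set (Fin n)} (h : A.Subsingleton)
    (Q : Setoid (Fin n)) : modp n A ≤ Q := by
  rw [Setoid.le_def]
  intro x y hxy
  rcases hxy with rfl | ⟨hx, hy⟩
  · exact Q.refl' x
  · obtain rfl := h hx hy
    exact Q.refl' x

lemma modp_eq_bot_of_subsingleton {n : ℕ} {A : Set (Fin n)} (h : A.Subsingleton) :
    modp n A = ⊥ :=
  le_antisymm (modp_le_of_subsingleton h ⊥) bot_le

lemma embedded_empty (n : ℕ) (Q : Setoid (Fin n)) : IsEmbedded n (∅, Q) := by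
  unfold IsEmbedded EmbClosure
  refine Prod.ext ?_ ?_
  · simp
  · simpa using sup_eq_left.mpr (modp_le_of_subsingleton Set.subsingleton_empty Q)

lemma embedded_univ_top (n : ℕ) : IsEmbedded n (Set.univ, ⊤) := by
  unfold IsEmbedded EmbClosure
  refine Prod.ext ?_ ?_
  · ext y
    simp only [Set.mem_setOf_eq, Set.mem_univ, iff_true]
    exact ⟨y, trivial, Setoid.refl' _ y⟩
  · exact sup_eq_left.mpr le_top

lemma embedded_singleton (n : ℕ) (i : Fin n) : IsEmbedded n ({i}, ⊥) := by
  have hb : modp n ({i} : Set (Fin n)) = ⊥ :=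
    modp_eq_bot_of_subsingleton Set.subsingleton_singleton
  unfold IsEmbedded EmbClosure
  refine Prod.ext ?_ ?_
  · ext y
    simp only [Set.mem_setOf_eq, hb, sup_idem, Set.mem_singleton_iff]
    constructor
    · rintro ⟨a, ha, hrel⟩
      subst ha
      have h2 : ((⊥ : Setoid (Fin n)) ⊔ modp n {a}) y a := hrel
      rw [hb, sup_idem] at h2
      simpa [Setoid.bot_def] using h2
    · rintro rfl
      exact ⟨y, rfl, Setoid.refl' _ y⟩
  · simp [hb]

/-- The bottom element `(∅, P_⊥)` of `ℰ^N`. -/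
def botE (n : ℕ) : Emb n := ⟨(∅, ⊥), embedded_empty n ⊥⟩

/-- The top element `(N, P^⊤)` of `ℰ^N`. -/
def topE (n : ℕ) : Emb n := ⟨(Set.univ, ⊤), embedded_univ_top n⟩

/-- The atom `({i}, P_⊥)` of `ℰ^N`. -/
def atomS (n : ℕ) (i : Fin n) : Emb n := ⟨({i}, ⊥), embedded_singleton n i⟩

/-- The atom `(∅, [ij])` of `ℰ^N`, where `[ij]` is the atom of the partition lattice
whose unique non-singleton block is the pair `{i, j}`. -/
def atomP (n : ℕ) (i j : Fin n) : Emb n := ⟨(∅, modp n {i, j}), embedded_empty n _⟩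

/-- A pair is an atom candidate: of the form `({i},P_⊥)` or `(∅,[ij])` with `i ≠ j`. -/
def IsAtomPair (n : ℕ) (a : XN n) : Prop :=
  (∃ i : Fin n, a = ({i}, ⊥)) ∨ ∃ i j : Fin n, i ≠ j ∧ a = (∅, modp n {i, j})

/-- The number of blocks `|P|` of a partition. -/
noncomputable def numBlocks {α : Type*} (P : Setoid α) : ℕ := P.classes.ncard

/-- The rank function `r(A,P) = (n − |P|) + min{|A|,1}` of `ℰ^N`. -/
noncomputable def erank (n : ℕ) (x : XN n) : ℕ := (n - numBlocks x.2) + min x.1.ncard 1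

/-- The partition `Q^S` of `S` induced by a partition `Q` of `N`. -/
def indPart {n : ℕ} (S : Set (Fin n)) (Q : Setoid (Fin n)) : Setoid S :=
  Setoid.comap Subtype.val Q

/-- `mu` is the Möbius function of the (finite) poset `α`. -/
def IsMobius {α : Type*} [PartialOrder α] (mu : α → α → ℤ) : Prop :=
  (∀ x, mu x x = 1) ∧
  (∀ x y, ¬x ≤ y → mu x y = 0) ∧
  (∀ x y, x < y → mu x y = -∑ᶠ z ∈ Set.Ico x y, mu x z)

section AuxTest
open Setoid
variable {n : ℕ}

instance : Finite (Setoid (Fin n)) :=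
  Finite.of_injective (fun r => r.r) fun r s h => by cases r; cases s; congr

lemma isEmbedded_iff {x : XN n} : IsEmbedded n x ↔ x.1 = ∅ ∨ x.1 ∈ x.2.classes := by
  obtain ⟨A, P⟩ := x
  constructor
  · intro h
    rw [IsEmbedded, EmbClosure, Prod.mk.injEq] at h
    obtain ⟨h1, h2⟩ := h
    have hle : modp n A ≤ P := sup_eq_left.mp h2
    rcases A.eq_empty_or_nonempty with hA | ⟨a0, ha0⟩
    · exact Or.inl hA
    · refine Or.inr ⟨a0, ?_⟩
      rw [h2] at h1
      ext x
      constructor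
      · intro hx
        exact hle (Or.inr ⟨hx, ha0⟩)
      · intro hx
        rw [← h1]
        exact ⟨a0, ha0, hx⟩
  · rintro (rfl | ⟨a0, hA⟩)
    · exact embedded_empty n P
    · replace hA : A = {x | P x a0} := hA
      subst hA
      have hle : modp n {x | P x a0} ≤ P := by
        rw [Setoid.le_def]
        rintro x y (rfl | ⟨hx, hy⟩)
        · exact P.refl' x
        · exact P.trans' hx (P.symm' hy)
      have h2 : P ⊔ modp n {x | P x a0} = P := sup_eq_left.mpr hle
      rw [IsEmbedded, EmbClosure, Prod.mk.injEq]
      refine ⟨?_, h2⟩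
      rw [h2]
      ext y
      simp only [Set.mem_setOf_eq]
      constructor
      · rintro ⟨a, ha, hya⟩
        exact P.trans' hya ha
      · intro hy
        exact ⟨a0, P.refl' a0, hy⟩

end AuxTest
section Aux2
variable {n : ℕ}

lemma classes_nonempty {P : Setoid (Fin n)} {A : Set (Fin n)} (hA : A ∈ P.classes) :
    A.Nonempty := by
  obtain ⟨a, rfl⟩ := hA
  exact ⟨a, P.refl' a⟩

open scoped Classical in
noncomputable def embEquivSigma (n : ℕ) :
    Emb n ≃ Σ P : Setoid (Fin n), Option P.classes where
  toFun x := ⟨x.1.2, if h : x.1.1 = ∅ then none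
    else some ⟨x.1.1, (isEmbedded_iff.mp x.2).resolve_left h⟩⟩
  invFun y := y.2.elim ⟨(∅, y.1), embedded_empty n y.1⟩
    (fun A => ⟨(A.1, y.1), isEmbedded_iff.mpr (Or.inr A.2)⟩)
  left_inv x := by
    by_cases h : x.1.1 = ∅
    · simp only [dif_pos h]
      exact Subtype.ext (Prod.ext h.symm rfl)
    · simp only [dif_neg h]
      exact Subtype.ext rfl
  right_inv y := by
    obtain ⟨P, A⟩ := y
    cases A with
    | none =>
      show (⟨P, if h : (∅ : Set (Fin n)) = ∅ then none else _⟩ :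
        Σ P : Setoid (Fin n), Option P.classes) = ⟨P, none⟩
      exact congrArg (Sigma.mk P) (dif_pos rfl)
    | some A =>
      have hne : A.1 ≠ ∅ := (classes_nonempty A.2).ne_empty
      show (⟨P, if h : A.1 = ∅ then none else _⟩ :
        Σ P : Setoid (Fin n), Option P.classes) = ⟨P, some A⟩
      refine congrArg (Sigma.mk P) ((dif_neg hne).trans ?_)
      rfl

lemma numBlocks_eq_card_quot (P : Setoid (Fin n)) :
    numBlocks P = Nat.card (Quotient P) := by
  rw [numBlocks, ← Nat.card_coe_set_eq]
  exact (Nat.card_congr (Setoid.quotientEquivClasses P)).symm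

lemma numBlocks_mem_Icc (hn : 1 ≤ n) (P : Setoid (Fin n)) :
    numBlocks P ∈ Finset.Icc 1 n := by
  rw [Finset.mem_Icc, numBlocks_eq_card_quot]
  constructor
  · exact Nat.one_le_iff_ne_zero.mpr
      (Nat.card_ne_zero.mpr ⟨⟨Quotient.mk P ⟨0, hn⟩⟩, inferInstance⟩)
  · have := Nat.card_le_card_of_surjective (Quotient.mk P) (Quotient.mk'_surjective)
    simpa using this

lemma card_emb_eq_sum (n : ℕ) (hn : 1 ≤ n) :
    Nat.card (Emb n) =
      ∑ k ∈ Finset.Icc 1 n, (k + 1) * Nat.card {P : Setoid (Fin n) // numBlocks P = k} := by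
  classical
  letI : Fintype (Setoid (Fin n)) := Fintype.ofFinite _
  letI : ∀ P : Setoid (Fin n), Fintype P.classes := fun P => Fintype.ofFinite _
  rw [Nat.card_congr (embEquivSigma n), Nat.card_eq_fintype_card, Fintype.card_sigma]
  have h1 : ∀ P : Setoid (Fin n), Fintype.card (Option P.classes) = numBlocks P + 1 := by
    intro P
    rw [Fintype.card_option, numBlocks, ← Nat.card_coe_set_eq, Nat.card_eq_fintype_card]
  simp_rw [h1]
  rw [← Finset.sum_fiberwise_of_maps_to (fun P _ => numBlocks_mem_Icc hn P)
    (fun P => numBlocks P + 1)]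
  refine Finset.sum_congr rfl fun k _ => ?_
  rw [Finset.sum_congr rfl (fun P hP => by
    rw [(Finset.mem_filter.mp hP).2]), Finset.sum_const, smul_eq_mul,
    Nat.card_eq_fintype_card, Fintype.card_subtype, mul_comm]

end Aux2
section Aux3
variable {n : ℕ}

/-- Extension relation on `Fin (n+1)`. -/
def extRel (A : Set (Fin n)) (P : Setoid (Fin n)) (u v : Fin (n + 1)) : Prop :=
  Fin.lastCases (Fin.lastCases True (fun y => y ∈ A) v)
    (fun x => Fin.lastCases (x ∈ A) (fun y => P x y) v) u

@[simp] lemma extRel_last_last {A : Set (Fin n)} {P : Setoid (Fin n)} :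
    extRel A P (Fin.last n) (Fin.last n) = True := by
  simp [extRel]

@[simp] lemma extRel_last_cast {A : Set (Fin n)} {P : Setoid (Fin n)} (y : Fin n) :
    extRel A P (Fin.last n) y.castSucc = (y ∈ A) := by
  simp [extRel]

@[simp] lemma extRel_cast_last {A : Set (Fin n)} {P : Setoid (Fin n)} (x : Fin n) :
    extRel A P x.castSucc (Fin.last n) = (x ∈ A) := by
  simp [extRel]

@[simp] lemma extRel_cast_cast {A : Set (Fin n)} {P : Setoid (Fin n)} (x y : Fin n) :
    extRel A P x.castSucc y.castSucc = P x y := by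
  simp [extRel]

lemma rel_of_mem_mem {A : Set (Fin n)} {P : Setoid (Fin n)}
    (h : A = ∅ ∨ A ∈ P.classes) {x y : Fin n} (hx : x ∈ A) (hy : y ∈ A) : P x y := by
  rcases h with rfl | ⟨a, rfl⟩
  · exact absurd hx (Set.notMem_empty x)
  · exact P.trans' hx (P.symm' hy)

lemma mem_of_rel_mem {A : Set (Fin n)} {P : Setoid (Fin n)}
    (h : A = ∅ ∨ A ∈ P.classes) {x y : Fin n} (hxy : P x y) (hy : y ∈ A) : x ∈ A := by
  rcases h with rfl | ⟨a, rfl⟩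
  · exact absurd hy (Set.notMem_empty y)
  · exact P.trans' hxy hy

/-- Extend an embedded subset of `Fin n` to a partition of `Fin (n+1)`. -/
def toBig (x : Emb n) : Setoid (Fin (n + 1)) where
  r := extRel x.1.1 x.1.2
  iseqv := by
    obtain ⟨⟨A, P⟩, hx⟩ := x
    have h := isEmbedded_iff.mp hx
    refine ⟨fun u => ?_, fun {u v} huv => ?_, fun {u v w} huv hvw => ?_⟩
    · induction u using Fin.lastCases with
      | last => simp
      | cast x => simpa using P.refl' x
    · induction u using Fin.lastCases with
      | last =>
        induction v using Fin.lastCases with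
        | last => simp
        | cast y => simpa using (by simpa using huv : y ∈ A)
      | cast x =>
        induction v using Fin.lastCases with
        | last => simpa using (by simpa using huv : x ∈ A)
        | cast y => simpa using P.symm' (by simpa using huv)
    · induction u using Fin.lastCases with
      | last =>
        induction v using Fin.lastCases with
        | last => simpa using hvw
        | cast y =>
          have hy : y ∈ A := by simpa using huv
          induction w using Fin.lastCases with
          | last => simp
          | cast z =>
            have hyz : P y z := by simpa using hvw
            simpa using mem_of_rel_mem h (P.symm' hyz) hy
      | cast x =>
        induction v using Fin.lastCases with
        | last =>
          have hx' : x ∈ A := by simpa using huv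
          induction w using Fin.lastCases with
          | last => simp [hx']
          | cast z =>
            have hz : z ∈ A := by simpa using hvw
            simpa using rel_of_mem_mem h hx' hz
        | cast y =>
          have hxy : P x y := by simpa using huv
          induction w using Fin.lastCases with
          | last =>
            have hy : y ∈ A := by simpa using hvw
            simpa using mem_of_rel_mem h hxy hy
          | cast z =>
            have hyz : P y z := by simpa using hvw
            simpa using P.trans' hxy hyz

/-- Restrict a partition of `Fin (n+1)` to an embedded subset of `Fin n`. -/
def toSmall (Q : Setoid (Fin (n + 1))) : Emb n :=
  ⟨({x | Q x.castSucc (Fin.last n)}, Setoid.comap Fin.castSucc Q), by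
    rw [isEmbedded_iff]
    rcases Set.eq_empty_or_nonempty {x : Fin n | Q x.castSucc (Fin.last n)} with hA | ⟨a0, ha0⟩
    · exact Or.inl hA
    · refine Or.inr ⟨a0, ?_⟩
      ext x
      simp only [Set.mem_setOf_eq]
      constructor
      · intro hx
        exact Q.trans' hx (Q.symm' ha0)
      · intro hx
        exact Q.trans' hx ha0⟩

def embEquivBig (n : ℕ) : Emb n ≃ Setoid (Fin (n + 1)) where
  toFun := toBig
  invFun := toSmall
  left_inv x := by
    obtain ⟨⟨A, P⟩, hx⟩ := x
    refine Subtype.ext (Prod.ext ?_ ?_)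
    · ext a
      show extRel A P a.castSucc (Fin.last n) ↔ a ∈ A
      simp
    · refine Setoid.ext fun a b => ?_
      show extRel A P a.castSucc b.castSucc ↔ P a b
      simp
  right_inv Q := by
    refine Setoid.ext fun u v => ?_
    induction u using Fin.lastCases with
    | last =>
      induction v using Fin.lastCases with
      | last => simpa [toBig, toSmall] using Q.refl' (Fin.last n)
      | cast y =>
        show extRel _ _ _ _ ↔ _
        simp only [extRel_last_cast, Set.mem_setOf_eq, toSmall]
        exact ⟨Q.symm', Q.symm'⟩
    | cast x =>
      induction v using Fin.lastCases with
      | last =>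
        show extRel _ _ _ _ ↔ _
        simp only [extRel_cast_last, Set.mem_setOf_eq, toSmall]
      | cast y =>
        show extRel _ _ _ _ ↔ _
        simp only [extRel_cast_cast, toSmall]
        exact Iff.rfl

end Aux3

theorem card_embedded_eq_bell (n : ℕ) (hn : 1 ≤ n) :
    Nat.card (Emb n) =
      ∑ k ∈ Finset.Icc 1 n, (k + 1) * Nat.card {P : Setoid (Fin n) // numBlocks P = k} ∧
    Nat.card (Emb n) = Nat.card (Setoid (Fin (n + 1))) := ⟨card_emb_eq_sum n hn, Nat.card_congr (embEquivBig n)⟩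
end

section
/- (Steinitz exchange, Proposition 1.) The closure cl satisfies the exchange axiom on atoms: for every embedded subset (A,P) ∈ ℰ^N and every pair of atoms a, b of ℰ^N (each of the form ({i},P_⊥) for i ∈ N or (∅,[ij]) for i < j) with a ⋢ (A,P) and b ⋢ (A,P), if b ⊑ cl((A,P) ⊔ a), then a ⊑ cl((A,P) ⊔ b). -/
open scoped BigOperators

lemma modp_rel {n : ℕ} (A : Set (Fin n)) (x y : Fin n) :
    modp n A x y ↔ x = y ∨ (x ∈ A ∧ y ∈ A) := Iff.rfl

lemma sup_modp_iff {n : ℕ} (P : Setoid (Fin n)) (S : Set (Fin n)) (x y : Fin n) :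
    (P ⊔ modp n S) x y ↔ P x y ∨ ((∃ s ∈ S, P x s) ∧ ∃ s ∈ S, P y s) := by
  have hR : ∃ R : Setoid (Fin n),
      (∀ u v, R u v ↔ (P u v ∨ ((∃ s ∈ S, P u s) ∧ ∃ s ∈ S, P v s))) := by
    refine ⟨⟨fun u v => P u v ∨ ((∃ s ∈ S, P u s) ∧ ∃ s ∈ S, P v s), ?_, ?_, ?_⟩,
      fun _ _ => Iff.rfl⟩
    · exact fun u => Or.inl (P.refl' u)
    · rintro u v (h | ⟨h1, h2⟩)
      · exact Or.inl (P.symm' h)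
      · exact Or.inr ⟨h2, h1⟩
    · rintro u v w (h | ⟨h1, h2⟩) (h' | ⟨h1', h2'⟩)
      · exact Or.inl (P.trans' h h')
      · exact Or.inr ⟨(by obtain ⟨s, hs, hp⟩ := h1'; exact ⟨s, hs, P.trans' h hp⟩), h2'⟩
      · exact Or.inr ⟨h1, (by obtain ⟨s, hs, hp⟩ := h2; exact ⟨s, hs, P.trans' (P.symm' h') hp⟩)⟩
      · exact Or.inr ⟨h1, h2'⟩
  obtain ⟨R, hRrel⟩ := hR
  have key : P ⊔ modp n S = R := by
    apply le_antisymm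
    · refine sup_le ?_ ?_
      · exact Setoid.le_def.mpr (fun h => (hRrel _ _).mpr (Or.inl h))
      · refine Setoid.le_def.mpr ?_
        rintro u v (rfl | ⟨hu, hv⟩)
        · exact R.refl' u
        · exact (hRrel _ _).mpr (Or.inr ⟨⟨u, hu, P.refl' u⟩, ⟨v, hv, P.refl' v⟩⟩)
    · refine Setoid.le_def.mpr ?_
      intro u v huv
      rcases (hRrel u v).mp huv with h | ⟨⟨s, hs, hus⟩, ⟨t, ht, hvt⟩⟩
      · exact le_sup_left (α := Setoid (Fin n)) h
      · have h1 : (P ⊔ modp n S) u s := le_sup_left (α := Setoid (Fin n)) hus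
        have h2 : (P ⊔ modp n S) s t :=
          le_sup_right (α := Setoid (Fin n)) (Or.inr ⟨hs, ht⟩ : modp n S s t)
        have h3 : (P ⊔ modp n S) t v :=
          le_sup_left (α := Setoid (Fin n)) (P.symm' hvt)
        exact Setoid.trans' _ (Setoid.trans' _ h1 h2) h3
  rw [key]
  exact hRrel x y

lemma modp_pair_le {n : ℕ} {i j : Fin n} {Q : Setoid (Fin n)} :
    modp n {i, j} ≤ Q ↔ Q i j := by
  constructor
  · intro h
    exact h (Or.inr ⟨Or.inl rfl, Or.inr rfl⟩)
  · intro h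
    refine Setoid.le_def.mpr ?_
    rintro x y (rfl | ⟨(rfl | rfl), (rfl | rfl)⟩)
    · exact Q.refl' _
    · exact Q.refl' _
    · exact h
    · exact Q.symm' h
    · exact Q.refl' _

lemma emb_conn {n : ℕ} {x : XN n} (hx : IsEmbedded n x) :
    ∀ a ∈ x.1, ∀ a' ∈ x.1, x.2 a a' := by
  intro a ha a' ha'
  have hs : x.2 ⊔ modp n x.1 = x.2 := congrArg Prod.snd hx
  have : modp n x.1 ≤ x.2 := hs ▸ le_sup_right
  exact this (Or.inr ⟨ha, ha'⟩)

lemma emb_closed {n : ℕ} {x : XN n} (hx : IsEmbedded n x) :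
    ∀ y a, a ∈ x.1 → x.2 y a → y ∈ x.1 := by
  intro y a ha hya
  have hf : {y | ∃ a ∈ x.1, (x.2 ⊔ modp n x.1) y a} = x.1 := congrArg Prod.fst hx
  rw [← hf]
  exact ⟨a, ha, le_sup_left (α := Setoid (Fin n)) hya⟩

theorem steinitz_exchange (n : ℕ) (hn : 1 ≤ n) (x a b : XN n)
    (hx : IsEmbedded n x) (ha : IsAtomPair n a) (hb : IsAtomPair n b)
    (hax : ¬a ≤ x) (hbx : ¬b ≤ x) (h : b ≤ EmbClosure n (x ⊔ a)) :
    a ≤ EmbClosure n (x ⊔ b) := by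
  obtain ⟨A, P⟩ := x
  have hPA : P ⊔ modp n A = P := congrArg Prod.snd hx
  have hconn : ∀ c ∈ A, ∀ c' ∈ A, P c c' := emb_conn hx
  have hclosed : ∀ y c, c ∈ A → P y c → y ∈ A := emb_closed hx
  have habs : ∀ m : Setoid (Fin n), (P ⊔ m) ⊔ modp n A = P ⊔ m := by
    intro m; rw [sup_right_comm, hPA]
  rcases ha with ⟨i, rfl⟩ | ⟨i, j, hij, rfl⟩ <;> rcases hb with ⟨k, rfl⟩ | ⟨k, l, hkl, rfl⟩
  · -- a = ({i},⊥), b = ({k},⊥)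
    have hiA : i ∉ A := fun hiA => hax (Prod.le_def.mpr
      ⟨Set.singleton_subset_iff.mpr hiA, bot_le⟩)
    have hkA : k ∉ A := fun hkA => hbx (Prod.le_def.mpr
      ⟨Set.singleton_subset_iff.mpr hkA, bot_le⟩)
    have hk' : ∃ c ∈ A ∪ {i}, (P ⊔ modp n (A ∪ {i})) k c := by
      have := (Prod.le_def.mp h).1 (Set.mem_singleton k)
      rw [Prod.mk_sup_mk, sup_bot_eq] at this
      exact this
    have hPki : P k i := by
      obtain ⟨c, hc, hrel⟩ := hk'
      rw [sup_modp_iff] at hrel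
      rcases hrel with hp | ⟨⟨s, hs, hks⟩, -⟩
      · rcases hc with hcA | rfl
        · exact absurd (hclosed k c hcA hp) hkA
        · exact hp
      · rcases hs with hsA | rfl
        · exact absurd (hclosed k s hsA hks) hkA
        · exact hks
    refine Prod.le_def.mpr ⟨?_, bot_le⟩
    intro z hz
    rcases hz with rfl
    rw [Prod.mk_sup_mk, sup_bot_eq]
    simp only [EmbClosure, Prod.mk_sup_mk, Set.sup_eq_union, sup_bot_eq, Set.mem_setOf_eq]
    exact ⟨k, Set.mem_union_right _ rfl,
      le_sup_left (α := Setoid (Fin n)) (P.symm' hPki)⟩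
  · -- a = ({i},⊥), b = (∅, [kl])
    have hiA : i ∉ A := fun hiA => hax (Prod.le_def.mpr
      ⟨Set.singleton_subset_iff.mpr hiA, bot_le⟩)
    have hPkl : ¬ P k l := fun hp => hbx (Prod.le_def.mpr
      ⟨Set.empty_subset _, modp_pair_le.mpr hp⟩)
    have hQkl : (P ⊔ modp n (A ∪ {i})) k l := by
      have := modp_pair_le.mp (Prod.le_def.mp h).2
      rw [Prod.mk_sup_mk, sup_bot_eq] at this
      exact this
    rw [sup_modp_iff] at hQkl
    refine Prod.le_def.mpr ⟨?_, bot_le⟩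
    intro z hz
    rcases hz with rfl
    rw [Prod.mk_sup_mk, show A ⊔ (∅ : Set (Fin n)) = A from Set.union_empty A]
    simp only [EmbClosure, Prod.mk_sup_mk, Set.sup_eq_union, Set.union_empty,
      Set.mem_setOf_eq, habs]
    rw [habs]
    rcases hQkl with hp | ⟨⟨s, hs, hks⟩, ⟨t, ht, hlt⟩⟩
    · exact absurd hp hPkl
    · rcases hs with hsA | rfl
      · rcases ht with htA | rfl
        · exact absurd (P.trans' hks (P.trans' (hconn s hsA t htA) (P.symm' hlt))) hPkl
        · -- s ∈ A, t = i : P k s, P l i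
          refine ⟨s, hsA, ?_⟩
          rw [sup_modp_iff]
          exact Or.inr ⟨⟨l, Set.mem_insert_of_mem _ rfl, P.symm' hlt⟩,
            ⟨k, Set.mem_insert _ _, P.symm' hks⟩⟩
      · rcases ht with htA | rfl
        · -- s = i, t ∈ A : P k i, P l t
          refine ⟨t, htA, ?_⟩
          rw [sup_modp_iff]
          exact Or.inr ⟨⟨k, Set.mem_insert _ _, P.symm' hks⟩,
            ⟨l, Set.mem_insert_of_mem _ rfl, P.symm' hlt⟩⟩
        · exact absurd (P.trans' hks (P.symm' hlt)) hPkl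
  · -- a = (∅,[ij]), b = ({k},⊥)
    have hPij : ¬ P i j := fun hp => hax (Prod.le_def.mpr
      ⟨Set.empty_subset _, modp_pair_le.mpr hp⟩)
    have hkA : k ∉ A := fun hkA => hbx (Prod.le_def.mpr
      ⟨Set.singleton_subset_iff.mpr hkA, bot_le⟩)
    have hk' : ∃ c ∈ A, (P ⊔ modp n {i, j}) k c := by
      have := (Prod.le_def.mp h).1 (Set.mem_singleton k)
      rw [Prod.mk_sup_mk, show A ⊔ (∅ : Set (Fin n)) = A from Set.union_empty A] at this
      unfold EmbClosure at this
      rw [habs] at this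
      exact this
    refine Prod.le_def.mpr ⟨Set.empty_subset _, ?_⟩
    have goal2 : (P ⊔ modp n (A ∪ {k})) i j := by
      obtain ⟨c, hcA, hrel⟩ := hk'
      rw [sup_modp_iff] at hrel
      rcases hrel with hp | ⟨⟨s, hs, hks⟩, ⟨t, ht, hct⟩⟩
      · exact absurd (hclosed k c hcA hp) hkA
      · rw [sup_modp_iff]
        rcases hs with rfl | rfl <;> rcases ht with rfl | rfl
        · exact absurd (hclosed k c hcA (P.trans' hks (P.symm' hct))) hkA
        · exact Or.inr ⟨⟨k, Set.mem_union_right _ rfl, P.symm' hks⟩,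
            ⟨c, Set.mem_union_left _ hcA, P.symm' hct⟩⟩
        · exact Or.inr ⟨⟨c, Set.mem_union_left _ hcA, P.symm' hct⟩,
            ⟨k, Set.mem_union_right _ rfl, P.symm' hks⟩⟩
        · exact absurd (hclosed k c hcA (P.trans' hks (P.symm' hct))) hkA
    have : (EmbClosure n ((A, P) ⊔ ({k}, (⊥ : Setoid (Fin n))))).2
        = P ⊔ modp n (A ∪ {k}) := by
      simp [EmbClosure, Prod.mk_sup_mk, Set.sup_eq_union, sup_bot_eq]
    rw [this]
    exact modp_pair_le.mpr goal2
  · -- a = (∅,[ij]), b = (∅,[kl])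
    have hPij : ¬ P i j := fun hp => hax (Prod.le_def.mpr
      ⟨Set.empty_subset _, modp_pair_le.mpr hp⟩)
    have hPkl : ¬ P k l := fun hp => hbx (Prod.le_def.mpr
      ⟨Set.empty_subset _, modp_pair_le.mpr hp⟩)
    have hQkl : (P ⊔ modp n {i, j}) k l := by
      have := modp_pair_le.mp (Prod.le_def.mp h).2
      rw [Prod.mk_sup_mk, show A ⊔ (∅ : Set (Fin n)) = A from Set.union_empty A] at this
      unfold EmbClosure at this
      rw [habs] at this
      exact this
    rw [sup_modp_iff] at hQkl
    refine Prod.le_def.mpr ⟨Set.empty_subset _, ?_⟩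
    have goal2 : (P ⊔ modp n {k, l}) i j := by
      rw [sup_modp_iff]
      rcases hQkl with hp | ⟨⟨s, hs, hks⟩, ⟨t, ht, hlt⟩⟩
      · exact absurd hp hPkl
      · rcases hs with rfl | rfl <;> rcases ht with rfl | rfl
        · exact absurd (P.trans' hks (P.symm' hlt)) hPkl
        · exact Or.inr ⟨⟨k, Set.mem_insert _ _, P.symm' hks⟩,
            ⟨l, Set.mem_insert_of_mem _ rfl, P.symm' hlt⟩⟩
        · exact Or.inr ⟨⟨l, Set.mem_insert_of_mem _ rfl, P.symm' hlt⟩,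
            ⟨k, Set.mem_insert _ _, P.symm' hks⟩⟩
        · exact absurd (P.trans' hks (P.symm' hlt)) hPkl
    have : (EmbClosure n ((A, P) ⊔ (∅, modp n {k, l}))).2 = P ⊔ modp n {k, l} := by
      simp [EmbClosure, Prod.mk_sup_mk, Set.sup_eq_union, Set.union_empty, habs]
    rw [this]
    exact modp_pair_le.mpr goal2
end
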